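/- Let L be a topological vector lattice, u : L → L the map u(x) = x ⊔ 0, C ⊆ L a convex subset, and D = u(C) with the subspace topology. Then the restriction u|_C : C → D is a compressive continuous surjection. -/

import Mathlib

/-- `(V', V)` is a compressive pair for `f`: both sets are open, `V' ⊆ V`, and
`f⁻¹(V')` is contractible in `f⁻¹(V)`. -/
def IsCompressivePair {X Y : Type*} [TopologicalSpace X] [TopologicalSpace Y]
    (f : X → Y) (V' V : Set Y) : Prop :=
  IsOpen V' ∧ IsOpen V ∧ V' ⊆ V ∧
    ∃ ξ : (f ⁻¹' V') × unitInterval → (f ⁻¹' V),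
      Continuous ξ ∧
      (∀ x : f ⁻¹' V', ((ξ (x, 0) : X) = (x : X))) ∧
      ∃ c : f ⁻¹' V, ∀ x : f ⁻¹' V', ξ (x, 1) = c

/-- `f` is compressive: for every `y ∈ Y` and every open neighborhood `V` of `y`
there is an open neighborhood `V'` of `y` such that `(V', V)` is a compressive
pair for `f`. -/
def IsCompressive {X Y : Type*} [TopologicalSpace X] [TopologicalSpace Y]
    (f : X → Y) : Prop :=
  ∀ (y : Y) (V : Set Y), IsOpen V → y ∈ V →
    ∃ V' : Set Y, y ∈ V' ∧ IsCompressivePair f V' V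

lemma aux_sandwich_abs {L : Type*} [AddCommGroup L] [Lattice L]
    [CovariantClass L L (· + ·) (· ≤ ·)] [CovariantClass L L (Function.swap (· + ·)) (· ≤ ·)]
    {p q z : L} (h1 : p ⊓ q ≤ z) (h2 : z ≤ p ⊔ q) : |z - q| ≤ |p - q| := by
  refine abs_le'.2 ⟨?_, ?_⟩
  · calc z - q ≤ (p ⊔ q) - q := sub_le_sub_right h2 q
      _ = (p - q) ⊔ (q - q) := sup_sub p q q
      _ ≤ |p - q| := by rw [sub_self]; exact sup_le (le_abs_self _) (abs_nonneg _)
  · calc -(z - q) = q - z := neg_sub z q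
      _ ≤ q - (p ⊓ q) := sub_le_sub_left h1 q
      _ = (q - p) ⊔ (q - q) := sub_inf p q q
      _ ≤ |p - q| := by
          rw [sub_self, abs_sub_comm]
          exact sup_le (le_abs_self _) (abs_nonneg _)

/-- **Lemma 2.1.** Let `L` be a topological vector lattice, `u x = x ⊔ 0`,
`C ⊆ L` convex, and `D = u(C)` with the subspace topology.  Then
`u|_C : C → D` is a compressive continuous surjection. -/
theorem stmt_4 {L : Type*} [AddCommGroup L] [Lattice L] [Module ℝ L]
    [TopologicalSpace L] [IsTopologicalAddGroup L] [ContinuousSMul ℝ L]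
    (hadd : ∀ x y z : L, x ≤ y → x + z ≤ y + z)
    (hsmul : ∀ (α : ℝ) (x y : L), 0 ≤ α → x ≤ y → α • x ≤ α • y)
    (hsup : Continuous fun p : L × L => p.1 ⊔ p.2)
    (hinf : Continuous fun p : L × L => p.1 ⊓ p.2)
    (hsolid : ∀ U ∈ nhds (0 : L), ∃ S ∈ nhds (0 : L), S ⊆ U ∧
      ∀ x y : L, y ∈ S → (x ⊔ 0) - (x ⊓ 0) ≤ (y ⊔ 0) - (y ⊓ 0) → x ∈ S)
    (u : L → L) (hu : ∀ x, u x = x ⊔ 0)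
    (C : Set L) (hC : Convex ℝ C)
    (D : Set L) (hD : D = u '' C)
    (f : C → D) (hf : ∀ x : C, (f x : L) = u (x : L)) :
    Continuous f ∧ Function.Surjective f ∧ IsCompressive f := by
  haveI inst1 : CovariantClass L L (· + ·) (· ≤ ·) :=
    ⟨fun c a b h => by simpa [add_comm] using hadd a b c h⟩
  haveI inst2 : CovariantClass L L (Function.swap (· + ·)) (· ≤ ·) :=
    ⟨fun c a b h => hadd a b c h⟩
  letI : DistribLattice L := AddCommGroup.toDistribLattice L
  -- `|w|` in the `(⊔ 0) - (⊓ 0)` form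
  have habs : ∀ w : L, (w ⊔ 0) - (w ⊓ 0) = |w| := fun w => by
    rw [sup_sub_inf_eq_abs_sub w 0, zero_sub, abs_neg]
  -- the key sandwich inequality
  have key : ∀ (a b : L) (t : ℝ), 0 ≤ t → t ≤ 1 →
      |u ((1 - t) • a + t • b) - u b| ≤ |u a - u b| := by
    intro a b t ht0 ht1
    set m := (1 - t) • a + t • b with hm
    have hconv : ∀ w : L, a ≤ w → b ≤ w → m ≤ w := by
      intro w haw hbw
      calc m ≤ (1 - t) • w + t • w :=
            add_le_add (hsmul _ _ _ (by linarith) haw) (hsmul _ _ _ ht0 hbw)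
        _ = w := by rw [← add_smul, sub_add_cancel, one_smul]
    have hconv' : ∀ w : L, w ≤ a → w ≤ b → w ≤ m := by
      intro w haw hbw
      calc w = (1 - t) • w + t • w := by rw [← add_smul, sub_add_cancel, one_smul]
        _ ≤ m := add_le_add (hsmul _ _ _ (by linarith) haw) (hsmul _ _ _ ht0 hbw)
    have hm1 : m ≤ a ⊔ b := hconv _ le_sup_left le_sup_right
    have hm2 : a ⊓ b ≤ m := hconv' _ inf_le_left inf_le_right
    have h1 : u a ⊓ u b ≤ u m := by
      rw [hu, hu, hu, ← sup_inf_right]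
      exact sup_le_sup_right hm2 0
    have h2 : u m ≤ u a ⊔ u b := by
      rw [hu, hu, hu, ← sup_sup_distrib_right]
      exact sup_le_sup_right hm1 0
    exact aux_sandwich_abs h1 h2
  have hfc : Continuous f := by
    apply continuous_induced_rng.mpr
    have : (Subtype.val ∘ f) = fun x : C => (x : L) ⊔ 0 := by
      funext x; simp [Function.comp, hf, hu]
    rw [this]
    exact hsup.comp ((continuous_subtype_val).prodMk continuous_const)
  refine ⟨hfc, ?_, ?_⟩
  · -- surjectivity
    intro d
    have : (d : L) ∈ u '' C := hD ▸ d.2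
    obtain ⟨c, hcC, hcd⟩ := this
    exact ⟨⟨c, hcC⟩, Subtype.ext (by rw [hf]; exact hcd)⟩
  · -- compressive
    intro y V hV hyV
    obtain ⟨W, hWopen, hWV⟩ := isOpen_induced_iff.mp hV
    have hyW : (y : L) ∈ W := by rw [← hWV] at hyV; exact hyV
    set U : Set L := (fun w : L => w + ↑y) ⁻¹' W with hUdef
    have hUnhds : U ∈ nhds (0 : L) := by
      refine (hWopen.preimage (continuous_add_right (y : L))).mem_nhds ?_
      simp [hUdef, hyW]
    obtain ⟨S, hSnhds, hSU, hSsolid⟩ := hsolid U hUnhds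
    obtain ⟨c, hcC, hcy⟩ : ∃ c ∈ C, u c = (y : L) := by
      have : (y : L) ∈ u '' C := hD ▸ y.2
      obtain ⟨c, hcC, hcy⟩ := this; exact ⟨c, hcC, hcy⟩
    set V' : Set D := Subtype.val ⁻¹' ((fun z : L => z - ↑y) ⁻¹' interior S) with hV'def
    have hWmem : ∀ z : L, z - ↑y ∈ S → z ∈ W := by
      intro z hz
      have := hSU hz
      simpa [hUdef] using this
    have hV'open : IsOpen V' :=
      (isOpen_interior.preimage (continuous_sub_right (y : L))).preimage continuous_subtype_val
    have hyV' : y ∈ V' := by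
      simp only [hV'def, Set.mem_preimage, sub_self]
      exact mem_interior_iff_mem_nhds.mpr hSnhds
    have hV'V : V' ⊆ V := by
      intro z hz
      have : (z : L) - ↑y ∈ S := interior_subset hz
      rw [← hWV]
      exact hWmem _ this
    -- membership of the homotopy in f ⁻¹' V
    have hmem : ∀ (x : C), f x ∈ V' → ∀ (t : ℝ), 0 ≤ t → t ≤ 1 →
        ∀ (hp : (1 - t) • (x : L) + t • c ∈ C), f ⟨_, hp⟩ ∈ V := by
      intro x hx t ht0 ht1 hp
      have hx' : u (x : L) - ↑y ∈ interior S := by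
        have h0 : (f x : L) - ↑y ∈ interior S := hx
        rwa [hf] at h0
      have hineq : |u ((1 - t) • (x : L) + t • c) - ↑y| ≤ |u (x : L) - ↑y| := by
        have h0 := key (x : L) c t ht0 ht1
        rwa [hcy] at h0
      have hpS : u ((1 - t) • (x : L) + t • c) - ↑y ∈ S :=
        hSsolid _ _ (interior_subset hx') (by rw [habs, habs]; exact hineq)
      rw [← hWV]
      show (f ⟨_, hp⟩ : L) ∈ W
      rw [hf]
      exact hWmem _ hpS
    have hcV : f ⟨c, hcC⟩ ∈ V := by
      rw [← hWV]
      show (f ⟨c, hcC⟩ : L) ∈ W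
      rw [hf]
      simpa [hcy] using hyW
    refine ⟨V', hyV', hV'open, hV, hV'V,
      fun q => ⟨⟨(1 - (q.2 : ℝ)) • ((q.1 : C) : L) + (q.2 : ℝ) • c,
        hC (q.1 : C).2 hcC (by linarith [q.2.2.2] : (0:ℝ) ≤ 1 - (q.2 : ℝ)) q.2.2.1 (by ring)⟩,
        hmem _ q.1.2 _ q.2.2.1 q.2.2.2 _⟩, ?_, ?_, ?_⟩
    · apply Continuous.subtype_mk
      apply Continuous.subtype_mk
      exact ((continuous_const.sub (continuous_subtype_val.comp continuous_snd)).smul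
          (continuous_subtype_val.comp (continuous_subtype_val.comp continuous_fst))).add
        ((continuous_subtype_val.comp continuous_snd).smul continuous_const)
    · intro x
      exact Subtype.ext (by simp)
    · exact ⟨⟨⟨c, hcC⟩, hcV⟩, fun x => Subtype.ext (Subtype.ext (by simp))⟩
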